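/- arXiv:1907.09053 — 3 statements merged into one kernel-verified Lean document; each statement's English description precedes it below -/
import Mathlib

section
/- Suppose for each precinct i there exists a subset A_i* ⊆ S_i with |A_i*| = D_i, and there exists β̃ ∈ ℝ^p such that β̃·x_{ij} > 0 for all j ∈ A_i* (all i) and β̃·x_{ij} < 0 for all j ∈ S_i \ A_i* (all i). Then the log-likelihood ℓ(t β̃) → 0 as t → ∞; since ℓ(β) < 0 for all β, the supremum of ℓ is 0 and is not attained, hence no finite MLE exists. -/
open Finset Filter

noncomputable def ell {J : Type*} [DecidableEq J] {p n : ℕ}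
    (S : Fin n → Finset J) (D : Fin n → ℕ) (x : Fin n → J → Fin p → ℝ)
    (β : Fin p → ℝ) : ℝ :=
  ∑ i, (Real.log (∑ A ∈ (S i).powersetCard (D i),
      Real.exp (∑ j ∈ A, ∑ a, x i j a * β a))
    - ∑ j ∈ S i, Real.log (1 + Real.exp (∑ a, x i j a * β a)))

private lemma exp_lin_tendsto {r : ℝ} (hr : r < 0) :
    Tendsto (fun t : ℝ => Real.exp (t * r)) atTop (nhds 0) :=
  Real.tendsto_exp_atBot.comp (tendsto_id.atTop_mul_const_of_neg hr)

private lemma log_one_add_exp_tendsto {r : ℝ} (hr : r < 0) :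
    Tendsto (fun t : ℝ => Real.log (1 + Real.exp (t * r))) atTop (nhds 0) := by
  have h1 : Tendsto (fun t : ℝ => 1 + Real.exp (t * r)) atTop (nhds 1) := by
    simpa using tendsto_const_nhds.add (exp_lin_tendsto hr)
  have := (Real.continuousAt_log (by norm_num : (1:ℝ) ≠ 0)).tendsto.comp h1
  simpa [Real.log_one, Function.comp_def] using this

private lemma log_one_add_exp (x : ℝ) :
    Real.log (1 + Real.exp x) = x + Real.log (1 + Real.exp (-x)) := by
  have hfac : (1 : ℝ) + Real.exp x = Real.exp x * (1 + Real.exp (-x)) := by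
    rw [mul_add, mul_one, ← Real.exp_add]
    simp [add_comm]
  rw [hfac, Real.log_mul (Real.exp_ne_zero x)
    (by positivity), Real.log_exp]

theorem no_finite_MLE_under_separation {J : Type*} [DecidableEq J] {p n : ℕ}
    (S : Fin n → Finset J) (D : Fin n → ℕ) (x : Fin n → J → Fin p → ℝ)
    (Astar : Fin n → Finset J) (hsub : ∀ i, Astar i ⊆ S i)
    (hcard : ∀ i, (Astar i).card = D i)
    (βt : Fin p → ℝ)
    (hpos : ∀ i, ∀ j ∈ Astar i, 0 < ∑ a, βt a * x i j a)
    (hneg : ∀ i, ∀ j ∈ S i \ Astar i, (∑ a, βt a * x i j a) < 0)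
    (hlt : ∀ β : Fin p → ℝ, ell S D x β < 0) :
    Tendsto (fun t : ℝ => ell S D x (t • βt)) atTop (nhds 0) ∧
      (⨆ β : Fin p → ℝ, ell S D x β) = 0 ∧
      ∀ β : Fin p → ℝ, ell S D x β < ⨆ β' : Fin p → ℝ, ell S D x β' := by
  -- notation
  set c : Fin n → J → ℝ := fun i j => ∑ a, x i j a * βt a with hc
  have hc_pos : ∀ i, ∀ j ∈ Astar i, 0 < c i j := by
    intro i j hj
    have := hpos i j hj
    simpa [hc, mul_comm] using this
  have hc_neg : ∀ i, ∀ j ∈ S i \ Astar i, c i j < 0 := by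
    intro i j hj
    have := hneg i j hj
    simpa [hc, mul_comm] using this
  set s : Fin n → Finset J → ℝ := fun i A => ∑ j ∈ A, c i j with hs
  have hmemP : ∀ i, Astar i ∈ (S i).powersetCard (D i) := by
    intro i
    exact Finset.mem_powersetCard.2 ⟨hsub i, hcard i⟩
  -- strict dominance of Astar
  have hdom : ∀ i, ∀ A ∈ (S i).powersetCard (D i), A ≠ Astar i →
      s i A - s i (Astar i) < 0 := by
    intro i A hA hAne
    obtain ⟨hAsub, hAcard⟩ := Finset.mem_powersetCard.1 hA
    have hkey : s i A - s i (Astar i)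
        = ∑ j ∈ A \ Astar i, c i j - ∑ j ∈ Astar i \ A, c i j := by
      rw [hs]
      exact (Finset.sum_sdiff_sub_sum_sdiff).symm
    have hne : (Astar i \ A).Nonempty := by
      rw [Finset.sdiff_nonempty]
      intro hsub'
      exact hAne (Finset.eq_of_subset_of_card_le hsub'
        (by rw [hcard i, hAcard])).symm
    have h1 : 0 < ∑ j ∈ Astar i \ A, c i j :=
      Finset.sum_pos (fun j hj => hc_pos i j (Finset.mem_sdiff.1 hj).1) hne
    have h2 : ∑ j ∈ A \ Astar i, c i j ≤ 0 := by
      apply Finset.sum_nonpos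
      intro j hj
      obtain ⟨hjA, hjn⟩ := Finset.mem_sdiff.1 hj
      exact (hc_neg i j (Finset.mem_sdiff.2 ⟨hAsub hjA, hjn⟩)).le
    rw [hkey]; linarith
  -- the identity for ell (t • βt)
  have hident : ∀ t : ℝ, ell S D x (t • βt)
      = ∑ i, (Real.log (∑ A ∈ (S i).powersetCard (D i),
          Real.exp (t * (s i A - s i (Astar i))))
        - ∑ j ∈ Astar i, Real.log (1 + Real.exp (t * (-(c i j))))
        - ∑ j ∈ S i \ Astar i, Real.log (1 + Real.exp (t * c i j))) := by
    intro t
    unfold ell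
    apply Finset.sum_congr rfl
    intro i _
    have hlin : ∀ j, (∑ a, x i j a * (t • βt) a) = t * c i j := by
      intro j
      rw [hc, Finset.mul_sum]
      apply Finset.sum_congr rfl
      intro a _
      simp [Pi.smul_apply, smul_eq_mul]; ring
    have hsarg : ∀ A : Finset J, (∑ j ∈ A, ∑ a, x i j a * (t • βt) a) = t * s i A := by
      intro A
      rw [hs, Finset.mul_sum]
      exact Finset.sum_congr rfl fun j _ => hlin j
    -- rewrite the big log
    have hgpos : (0:ℝ) < ∑ A ∈ (S i).powersetCard (D i),
        Real.exp (t * (s i A - s i (Astar i))) :=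
      Finset.sum_pos (fun A _ => Real.exp_pos _) ⟨_, hmemP i⟩
    have hlog1 : Real.log (∑ A ∈ (S i).powersetCard (D i),
          Real.exp (∑ j ∈ A, ∑ a, x i j a * (t • βt) a))
        = t * s i (Astar i) + Real.log (∑ A ∈ (S i).powersetCard (D i),
            Real.exp (t * (s i A - s i (Astar i)))) := by
      have : (∑ A ∈ (S i).powersetCard (D i),
            Real.exp (∑ j ∈ A, ∑ a, x i j a * (t • βt) a))
          = Real.exp (t * s i (Astar i)) * ∑ A ∈ (S i).powersetCard (D i),
              Real.exp (t * (s i A - s i (Astar i))) := by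
        rw [Finset.mul_sum]
        apply Finset.sum_congr rfl
        intro A _
        rw [hsarg A, ← Real.exp_add]
        ring_nf
      rw [this, Real.log_mul (Real.exp_ne_zero _) (ne_of_gt hgpos), Real.log_exp]
    -- split the sum over S i
    have hsplit : (∑ j ∈ S i, Real.log (1 + Real.exp (∑ a, x i j a * (t • βt) a)))
        = t * s i (Astar i)
          + ∑ j ∈ Astar i, Real.log (1 + Real.exp (t * (-(c i j))))
          + ∑ j ∈ S i \ Astar i, Real.log (1 + Real.exp (t * c i j)) := by
      have hdec : (∑ j ∈ S i \ Astar i, Real.log (1 + Real.exp (∑ a, x i j a * (t • βt) a)))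
          + ∑ j ∈ Astar i, Real.log (1 + Real.exp (∑ a, x i j a * (t • βt) a))
          = ∑ j ∈ S i, Real.log (1 + Real.exp (∑ a, x i j a * (t • βt) a)) :=
        Finset.sum_sdiff (hsub i)
      rw [← hdec]
      have hA : (∑ j ∈ Astar i, Real.log (1 + Real.exp (∑ a, x i j a * (t • βt) a)))
          = t * s i (Astar i) + ∑ j ∈ Astar i, Real.log (1 + Real.exp (t * (-(c i j)))) := by
        rw [hs, Finset.mul_sum, ← Finset.sum_add_distrib]
        apply Finset.sum_congr rfl
        intro j _
        rw [hlin j, log_one_add_exp (t * c i j)]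
        ring_nf
      have hB : (∑ j ∈ S i \ Astar i, Real.log (1 + Real.exp (∑ a, x i j a * (t • βt) a)))
          = ∑ j ∈ S i \ Astar i, Real.log (1 + Real.exp (t * c i j)) := by
        apply Finset.sum_congr rfl
        intro j _
        rw [hlin j]
      rw [hA, hB]; ring
    rw [hlog1, hsplit]; ring
  -- the main tendsto
  have hT : Tendsto (fun t : ℝ => ell S D x (t • βt)) atTop (nhds 0) := by
    rw [show (0:ℝ) = ∑ i : Fin n, (0:ℝ) by simp]
    apply Tendsto.congr (fun t => (hident t).symm)
    apply tendsto_finset_sum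
    intro i _
    have h1 : Tendsto (fun t : ℝ => Real.log (∑ A ∈ (S i).powersetCard (D i),
        Real.exp (t * (s i A - s i (Astar i))))) atTop (nhds 0) := by
      have hg : Tendsto (fun t : ℝ => ∑ A ∈ (S i).powersetCard (D i),
          Real.exp (t * (s i A - s i (Astar i)))) atTop (nhds 1) := by
        have hsum : ∀ t : ℝ, (∑ A ∈ (S i).powersetCard (D i),
            Real.exp (t * (s i A - s i (Astar i))))
            = Real.exp (t * (s i (Astar i) - s i (Astar i)))
              + ∑ A ∈ ((S i).powersetCard (D i)).erase (Astar i),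
                  Real.exp (t * (s i A - s i (Astar i))) := by
          intro t
          exact (Finset.add_sum_erase _ _ (hmemP i)).symm
        apply Tendsto.congr (fun t => (hsum t).symm)
        have hconst : Tendsto (fun t : ℝ =>
            Real.exp (t * (s i (Astar i) - s i (Astar i)))) atTop (nhds 1) := by
          simp
        have hrest : Tendsto (fun t : ℝ => ∑ A ∈ ((S i).powersetCard (D i)).erase (Astar i),
            Real.exp (t * (s i A - s i (Astar i)))) atTop (nhds 0) := by
          rw [show (0:ℝ) = ∑ A ∈ ((S i).powersetCard (D i)).erase (Astar i), (0:ℝ) by simp]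
          apply tendsto_finset_sum
          intro A hA
          exact exp_lin_tendsto (hdom i A (Finset.mem_of_mem_erase hA)
            (Finset.ne_of_mem_erase hA))
        simpa using hconst.add hrest
      have := (Real.continuousAt_log (by norm_num : (1:ℝ) ≠ 0)).tendsto.comp hg
      simpa [Real.log_one, Function.comp_def] using this
    have h2 : Tendsto (fun t : ℝ => ∑ j ∈ Astar i,
        Real.log (1 + Real.exp (t * (-(c i j))))) atTop (nhds 0) := by
      rw [show (0:ℝ) = ∑ j ∈ Astar i, (0:ℝ) by simp]
      apply tendsto_finset_sum
      intro j hj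
      exact log_one_add_exp_tendsto (by linarith [hc_pos i j hj])
    have h3 : Tendsto (fun t : ℝ => ∑ j ∈ S i \ Astar i,
        Real.log (1 + Real.exp (t * c i j))) atTop (nhds 0) := by
      rw [show (0:ℝ) = ∑ j ∈ S i \ Astar i, (0:ℝ) by simp]
      apply tendsto_finset_sum
      intro j hj
      exact log_one_add_exp_tendsto (hc_neg i j hj)
    simpa using (h1.sub h2).sub h3
  -- supremum facts
  have hbdd : BddAbove (Set.range fun β : Fin p → ℝ => ell S D x β) := by
    refine ⟨0, ?_⟩
    rintro _ ⟨β, rfl⟩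
    exact (hlt β).le
  have hsup_le : (⨆ β : Fin p → ℝ, ell S D x β) ≤ 0 :=
    ciSup_le fun β => (hlt β).le
  have hle_sup : (0:ℝ) ≤ ⨆ β : Fin p → ℝ, ell S D x β := by
    apply le_of_tendsto hT
    filter_upwards with t
    exact le_ciSup hbdd (t • βt)
  have hsup : (⨆ β : Fin p → ℝ, ell S D x β) = 0 := le_antisymm hsup_le hle_sup
  exact ⟨hT, hsup, fun β => by rw [hsup]; exact hlt β⟩
end

section
/- For β̃ as in the separation condition (β̃·x_{ij} > 0 on A_i* and < 0 on its complement, |A_i*| = D_i), along the ray β = t β̃, for each precinct i: log(∑_{A∈F_{D_i}} exp(t ∑_{j∈A} β̃·x_{ij})) − ∑_{j∈S_i} log(1+exp(t β̃·x_{ij})) → 0 as t → ∞. -/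
open Finset Filter

private lemma aux_tendsto_log_one_add_exp {c : ℝ} (hc : c < 0) :
    Tendsto (fun t : ℝ => Real.log (1 + Real.exp (t * c))) atTop (nhds 0) := by
  have h1 : Tendsto (fun t : ℝ => t * c) atTop atBot :=
    Tendsto.atTop_mul_const_of_neg hc tendsto_id
  have h2 : Tendsto (fun t : ℝ => Real.exp (t * c)) atTop (nhds 0) :=
    Real.tendsto_exp_atBot.comp h1
  have h3 : Tendsto (fun t : ℝ => 1 + Real.exp (t * c)) atTop (nhds 1) := by
    simpa using h2.const_add 1
  have h4 := ((Real.continuousAt_log (by norm_num : (1:ℝ) ≠ 0)).tendsto).comp h3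
  simpa [Real.log_one, Function.comp_def] using h4

theorem precinct_loglik_tendsto_zero_under_separation {J : Type*} [DecidableEq J] {p : ℕ}
    (S : Finset J) (x : J → Fin p → ℝ)
    (Astar : Finset J) (hsub : Astar ⊆ S) (D : ℕ) (hD : D = Astar.card)
    (βt : Fin p → ℝ)
    (hpos : ∀ j ∈ Astar, 0 < ∑ a, βt a * x j a)
    (hneg : ∀ j ∈ S \ Astar, (∑ a, βt a * x j a) < 0) :
    Tendsto (fun t : ℝ =>
        Real.log (∑ A ∈ S.powersetCard D, Real.exp (t * ∑ j ∈ A, ∑ a, βt a * x j a))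
          - ∑ j ∈ S, Real.log (1 + Real.exp (t * ∑ a, βt a * x j a)))
      atTop (nhds 0) := by
  set c : J → ℝ := fun j => ∑ a, βt a * x j a with hc
  set P := S.powersetCard D with hP
  set sA : Finset J → ℝ := fun A => ∑ j ∈ A, c j with hsA
  set M : ℝ := sA Astar with hM
  have hAstarP : Astar ∈ P := Finset.mem_powersetCard.2 ⟨hsub, hD.symm⟩
  -- strict domination: for A ∈ P with A ≠ Astar, sA A < M
  have hdom : ∀ A ∈ P, A ≠ Astar → sA A < M := by
    intro A hA hne
    obtain ⟨hAS, hAcard⟩ := Finset.mem_powersetCard.1 hA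
    have hsplitA : ∑ j ∈ A \ Astar, c j + ∑ j ∈ A ∩ Astar, c j = sA A := by
      rw [← Finset.sdiff_inter_self_left A Astar]
      exact Finset.sum_sdiff Finset.inter_subset_left
    have hsplitB : ∑ j ∈ Astar \ A, c j + ∑ j ∈ Astar ∩ A, c j = M := by
      rw [← Finset.sdiff_inter_self_left Astar A]
      exact Finset.sum_sdiff Finset.inter_subset_left
    have hne' : (Astar \ A).Nonempty := by
      rw [Finset.sdiff_nonempty]
      intro hsubAA
      exact hne (Finset.eq_of_subset_of_card_le hsubAA (by rw [hAcard, hD])).symm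
    have hposdiff : 0 < ∑ j ∈ Astar \ A, c j :=
      Finset.sum_pos (fun j hj => hpos j (Finset.mem_sdiff.1 hj).1) hne'
    have hnegdiff : ∑ j ∈ A \ Astar, c j ≤ 0 :=
      Finset.sum_nonpos (fun j hj => le_of_lt (hneg j (Finset.mem_sdiff.2
        ⟨hAS (Finset.mem_sdiff.1 hj).1, (Finset.mem_sdiff.1 hj).2⟩)))
    have hint : Finset.sum (A ∩ Astar) c = Finset.sum (Astar ∩ A) c := by
      rw [Finset.inter_comm]
    linarith [hsplitA, hsplitB]
  -- Piece 1
  have hP1 : Tendsto (fun t : ℝ => Real.log (∑ A ∈ P, Real.exp (t * (sA A - M))))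
      atTop (nhds 0) := by
    have hsum : Tendsto (fun t : ℝ => ∑ A ∈ P, Real.exp (t * (sA A - M))) atTop (nhds 1) := by
      have hone : (1:ℝ) = ∑ A ∈ P, (if A = Astar then (1:ℝ) else 0) := by
        rw [Finset.sum_ite_eq' P Astar (fun _ => (1:ℝ))]
        simp [hAstarP]
      rw [hone]
      apply tendsto_finset_sum
      intro A hA
      by_cases h : A = Astar
      · subst h
        simp [hM]
      · simp only [h, if_false]
        have hlt : sA A - M < 0 := sub_neg.2 (hdom A hA h)
        exact Real.tendsto_exp_atBot.comp (Tendsto.atTop_mul_const_of_neg hlt tendsto_id)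
    have h4 := ((Real.continuousAt_log (by norm_num : (1:ℝ) ≠ 0)).tendsto).comp hsum
    simpa [Real.log_one, Function.comp_def] using h4
  -- Piece 2
  have hP2 : Tendsto (fun t : ℝ => ∑ j ∈ Astar, (Real.log (1 + Real.exp (t * c j)) - t * c j))
      atTop (nhds 0) := by
    have : Tendsto (fun t : ℝ => ∑ j ∈ Astar, Real.log (1 + Real.exp (t * (-(c j)))))
        atTop (nhds 0) := by
      have := tendsto_finset_sum Astar (fun j hj =>
        aux_tendsto_log_one_add_exp (neg_neg_iff_pos.2 (hpos j hj)))
      simpa using this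
    refine this.congr (fun t => Finset.sum_congr rfl (fun j hj => ?_))
    have hkey : 1 + Real.exp (t * c j) = Real.exp (t * c j) * (1 + Real.exp (t * (-(c j)))) := by
      rw [mul_add, mul_one, ← Real.exp_add]
      have h0 : t * c j + t * -c j = 0 := by ring
      rw [h0, Real.exp_zero, add_comm]
    rw [hkey, Real.log_mul (Real.exp_ne_zero _) (by positivity), Real.log_exp]
    ring
  -- Piece 3
  have hP3 : Tendsto (fun t : ℝ => ∑ j ∈ S \ Astar, Real.log (1 + Real.exp (t * c j)))
      atTop (nhds 0) := by
    have := tendsto_finset_sum (S \ Astar) (fun j hj => aux_tendsto_log_one_add_exp (hneg j hj))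
    simpa using this
  -- Combine
  have hfinal := (hP1.sub hP2).sub hP3
  rw [show (0:ℝ) - 0 - 0 = 0 by ring] at hfinal
  refine hfinal.congr (fun t => ?_)
  have hpospos : 0 < ∑ A ∈ P, Real.exp (t * (sA A - M)) :=
    Finset.sum_pos (fun A _ => Real.exp_pos _) ⟨Astar, hAstarP⟩
  have hlog : Real.log (∑ A ∈ P, Real.exp (t * sA A))
      = t * M + Real.log (∑ A ∈ P, Real.exp (t * (sA A - M))) := by
    have : ∑ A ∈ P, Real.exp (t * sA A)
        = Real.exp (t * M) * ∑ A ∈ P, Real.exp (t * (sA A - M)) := by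
      rw [Finset.mul_sum]
      refine Finset.sum_congr rfl (fun A _ => ?_)
      rw [← Real.exp_add]
      congr 1
      ring
    rw [this, Real.log_mul (Real.exp_ne_zero _) (ne_of_gt hpospos), Real.log_exp]
  have hsplit : ∑ j ∈ S, Real.log (1 + Real.exp (t * c j))
      = ∑ j ∈ S \ Astar, Real.log (1 + Real.exp (t * c j))
        + ∑ j ∈ Astar, Real.log (1 + Real.exp (t * c j)) :=
    (Finset.sum_sdiff hsub).symm
  have htM : t * M = ∑ j ∈ Astar, t * c j := by
    rw [hM, hsA, Finset.mul_sum]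
  show _ = Real.log (∑ A ∈ P, Real.exp (t * sA A)) - ∑ j ∈ S, Real.log (1 + Real.exp (t * c j))
  rw [hlog, hsplit, Finset.sum_sub_distrib, htM]
  ring
end

section
/- Under the same Poisson binomial logistic model, the Hessian with respect to β of log P(∑_{j∈S} Y_j = D) equals Cov(∑_{j∈S} x_j Y_j | ∑_{j∈S} Y_j = D) − Cov(∑_{j∈S} x_j Y_j), where Cov denotes the covariance matrix of the ℝ^p-valued random vector ∑_j x_j Y_j. -/
open Finset
open scoped RealInnerProductSpace

noncomputable def logistic (z : ℝ) : ℝ := (1 + Real.exp (-z))⁻¹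

noncomputable def pbWeight {J : Type*} [DecidableEq J] (S A : Finset J) (pr : J → ℝ) : ℝ :=
  (∏ j ∈ A, pr j) * ∏ j ∈ S \ A, (1 - pr j)

noncomputable def pbPmf {J : Type*} [DecidableEq J] (S : Finset J) (D : ℕ) (pr : J → ℝ) : ℝ :=
  ∑ A ∈ S.powersetCard D, pbWeight S A pr

/-- The bilinear form `uᵀ Cov(∑_j x_j Y_j) v` for independent Bernoulli(pr j), `j ∈ S`. -/
noncomputable def pbCovForm {J : Type*} [DecidableEq J] {p : ℕ}
    (S : Finset J) (pr : J → ℝ) (x : J → EuclideanSpace ℝ (Fin p))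
    (u v : EuclideanSpace ℝ (Fin p)) : ℝ :=
  (∑ A ∈ S.powerset, pbWeight S A pr * (⟪∑ j ∈ A, x j, u⟫ * ⟪∑ j ∈ A, x j, v⟫))
    - (∑ A ∈ S.powerset, pbWeight S A pr * ⟪∑ j ∈ A, x j, u⟫) *
      (∑ A ∈ S.powerset, pbWeight S A pr * ⟪∑ j ∈ A, x j, v⟫)

/-- The bilinear form `uᵀ Cov(∑_j x_j Y_j ∣ ∑_j Y_j = D) v`. -/
noncomputable def pbCondCovForm {J : Type*} [DecidableEq J] {p : ℕ}
    (S : Finset J) (D : ℕ) (pr : J → ℝ) (x : J → EuclideanSpace ℝ (Fin p))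
    (u v : EuclideanSpace ℝ (Fin p)) : ℝ :=
  (pbPmf S D pr)⁻¹ *
      (∑ A ∈ S.powersetCard D, pbWeight S A pr * (⟪∑ j ∈ A, x j, u⟫ * ⟪∑ j ∈ A, x j, v⟫))
    - ((pbPmf S D pr)⁻¹ * ∑ A ∈ S.powersetCard D, pbWeight S A pr * ⟪∑ j ∈ A, x j, u⟫) *
      ((pbPmf S D pr)⁻¹ * ∑ A ∈ S.powersetCard D, pbWeight S A pr * ⟪∑ j ∈ A, x j, v⟫)

section AuxComb
variable {J : Type*} [DecidableEq J]


lemma pbWeight_insert_left {S A : Finset J} {a : J} (ha : a ∉ S) (hA : A ⊆ S) (pr : J → ℝ) :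
    pbWeight (insert a S) A pr = (1 - pr a) * pbWeight S A pr := by
  have haA : a ∉ A := fun h => ha (hA h)
  have hsd : insert a S \ A = insert a (S \ A) := by
    ext j
    simp only [mem_sdiff, mem_insert]
    constructor
    · rintro ⟨h1 | h1, h2⟩ <;> tauto
    · rintro (rfl | ⟨h1, h2⟩) <;> tauto
  rw [pbWeight, pbWeight, hsd, Finset.prod_insert (by simp [ha])]
  ring

lemma pbWeight_insert_insert {S A : Finset J} {a : J} (ha : a ∉ S) (hA : A ⊆ S) (pr : J → ℝ) :
    pbWeight (insert a S) (insert a A) pr = pr a * pbWeight S A pr := by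
  have haA : a ∉ A := fun h => ha (hA h)
  have hsd : insert a S \ insert a A = S \ A := by
    ext j
    simp only [mem_sdiff, mem_insert]
    constructor
    · rintro ⟨h1 | h1, h2⟩
      · exact absurd (Or.inl h1) h2
      · exact ⟨h1, fun hj => h2 (Or.inr hj)⟩
    · rintro ⟨h1, h2⟩
      exact ⟨Or.inr h1, by rintro (rfl | hj) <;> [exact ha h1; exact h2 hj]⟩
  rw [pbWeight, pbWeight, hsd, Finset.prod_insert haA]
  ring

lemma pb_sum_one (S : Finset J) (pr : J → ℝ) :
    ∑ A ∈ S.powerset, pbWeight S A pr = 1 := by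
  classical
  induction S using Finset.induction_on with
  | empty => simp [pbWeight]
  | insert a s ha ih =>
    rw [Finset.sum_powerset_insert ha]
    have h1 : ∑ A ∈ s.powerset, pbWeight (insert a s) A pr
        = ∑ A ∈ s.powerset, (1 - pr a) * pbWeight s A pr :=
      Finset.sum_congr rfl fun A hA => pbWeight_insert_left ha (Finset.mem_powerset.1 hA) pr
    have h2 : ∑ A ∈ s.powerset, pbWeight (insert a s) (insert a A) pr
        = ∑ A ∈ s.powerset, pr a * pbWeight s A pr :=
      Finset.sum_congr rfl fun A hA => pbWeight_insert_insert ha (Finset.mem_powerset.1 hA) pr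
    rw [h1, h2, ← Finset.mul_sum, ← Finset.mul_sum, ih]
    ring

lemma pb_sum_lin (S : Finset J) (pr f : J → ℝ) :
    ∑ A ∈ S.powerset, pbWeight S A pr * ∑ j ∈ A, f j = ∑ j ∈ S, pr j * f j := by
  classical
  induction S using Finset.induction_on with
  | empty => simp
  | insert a s ha ih =>
    rw [Finset.sum_powerset_insert ha]
    have h1 : ∑ A ∈ s.powerset, pbWeight (insert a s) A pr * ∑ j ∈ A, f j
        = ∑ A ∈ s.powerset, ((pbWeight s A pr * ∑ j ∈ A, f j)
            - pr a * (pbWeight s A pr * ∑ j ∈ A, f j)) := by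
      refine Finset.sum_congr rfl fun A hA => ?_
      rw [pbWeight_insert_left ha (Finset.mem_powerset.1 hA) pr]; ring
    have h2 : ∑ A ∈ s.powerset, pbWeight (insert a s) (insert a A) pr * ∑ j ∈ insert a A, f j
        = ∑ A ∈ s.powerset, (pr a * f a * pbWeight s A pr
            + pr a * (pbWeight s A pr * ∑ j ∈ A, f j)) := by
      refine Finset.sum_congr rfl fun A hA => ?_
      have haA : a ∉ A := fun h => ha (Finset.mem_powerset.1 hA h)
      rw [pbWeight_insert_insert ha (Finset.mem_powerset.1 hA) pr, Finset.sum_insert haA]; ring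
    rw [h1, h2, Finset.sum_sub_distrib, Finset.sum_add_distrib, ← Finset.mul_sum, ← Finset.mul_sum,
      ih, pb_sum_one, Finset.sum_insert ha]
    ring

lemma pb_sum_quad (S : Finset J) (pr f g : J → ℝ) :
    ∑ A ∈ S.powerset, pbWeight S A pr * ((∑ j ∈ A, f j) * (∑ j ∈ A, g j))
      = ∑ j ∈ S, pr j * (1 - pr j) * (f j * g j)
        + (∑ j ∈ S, pr j * f j) * (∑ j ∈ S, pr j * g j) := by
  classical
  induction S using Finset.induction_on with
  | empty => simp
  | insert a s ha ih =>
    rw [Finset.sum_powerset_insert ha]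
    have h1 : ∑ A ∈ s.powerset, pbWeight (insert a s) A pr * ((∑ j ∈ A, f j) * (∑ j ∈ A, g j))
        = ∑ A ∈ s.powerset, ((pbWeight s A pr * ((∑ j ∈ A, f j) * (∑ j ∈ A, g j)))
            - pr a * (pbWeight s A pr * ((∑ j ∈ A, f j) * (∑ j ∈ A, g j)))) := by
      refine Finset.sum_congr rfl fun A hA => ?_
      rw [pbWeight_insert_left ha (Finset.mem_powerset.1 hA) pr]; ring
    have h2 : ∑ A ∈ s.powerset, pbWeight (insert a s) (insert a A) pr *
          ((∑ j ∈ insert a A, f j) * (∑ j ∈ insert a A, g j))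
        = ∑ A ∈ s.powerset, (pr a * (f a * g a) * pbWeight s A pr
            + pr a * f a * (pbWeight s A pr * ∑ j ∈ A, g j)
            + pr a * g a * (pbWeight s A pr * ∑ j ∈ A, f j)
            + pr a * (pbWeight s A pr * ((∑ j ∈ A, f j) * (∑ j ∈ A, g j)))) := by
      refine Finset.sum_congr rfl fun A hA => ?_
      have haA : a ∉ A := fun h => ha (Finset.mem_powerset.1 hA h)
      rw [pbWeight_insert_insert ha (Finset.mem_powerset.1 hA) pr, Finset.sum_insert haA,
        Finset.sum_insert haA]
      ring
    rw [h1, h2]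
    simp only [Finset.sum_sub_distrib, Finset.sum_add_distrib, ← Finset.mul_sum]
    rw [ih, pb_sum_one, pb_sum_lin, pb_sum_lin, Finset.sum_insert ha, Finset.sum_insert ha,
      Finset.sum_insert ha]
    ring

end AuxComb

section AuxCalc

lemma logistic_pos (z : ℝ) : 0 < logistic z := by
  unfold logistic; positivity

lemma logistic_lt_one (z : ℝ) : logistic z < 1 := by
  unfold logistic
  rw [inv_lt_one_iff₀]
  right
  linarith [Real.exp_pos (-z)]

lemma hasDerivAt_logistic (z : ℝ) :
    HasDerivAt logistic (logistic z * (1 - logistic z)) z := by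
  have h1 : HasDerivAt (fun z : ℝ => 1 + Real.exp (-z)) (-Real.exp (-z)) z := by
    have h := (Real.hasDerivAt_exp (-z)).comp z (hasDerivAt_neg z)
    simpa using h.const_add 1
  have hne : 1 + Real.exp (-z) ≠ 0 := by positivity
  have h2 := h1.inv hne
  refine h2.congr_deriv ?_
  symm
  unfold logistic
  field_simp
  ring

variable {p : ℕ}

lemma hasFDerivAt_logistic_inner (x b : EuclideanSpace ℝ (Fin p)) :
    HasFDerivAt (fun b' : EuclideanSpace ℝ (Fin p) => logistic ⟪x, b'⟫)
      ((logistic ⟪x, b⟫ * (1 - logistic ⟪x, b⟫)) • innerSL ℝ x) b := by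
  have h1 : HasFDerivAt (fun b' : EuclideanSpace ℝ (Fin p) => ⟪x, b'⟫) (innerSL ℝ x) b :=
    (innerSL ℝ x).hasFDerivAt
  exact (hasDerivAt_logistic _).comp_hasFDerivAt b h1

variable {J : Type*} [DecidableEq J]

lemma hasFDerivAt_pbWeight (S A : Finset J) (hA : A ⊆ S)
    (x : J → EuclideanSpace ℝ (Fin p)) (b : EuclideanSpace ℝ (Fin p)) :
    HasFDerivAt (fun b' => pbWeight S A (fun j => logistic ⟪x j, b'⟫))
      ((pbWeight S A (fun j => logistic ⟪x j, b⟫)) •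
        (innerSL ℝ (∑ j ∈ A, x j)
          - ∑ j ∈ S, logistic ⟪x j, b⟫ • innerSL ℝ (x j))) b := by
  classical
  have h1 : HasFDerivAt (fun b' : EuclideanSpace ℝ (Fin p) => ∏ j ∈ A, logistic ⟪x j, b'⟫)
      (∑ i ∈ A, (∏ j ∈ A.erase i, logistic ⟪x j, b⟫) •
        ((logistic ⟪x i, b⟫ * (1 - logistic ⟪x i, b⟫)) • innerSL ℝ (x i))) b :=
    HasFDerivAt.finset_prod fun i _ => hasFDerivAt_logistic_inner (x i) b
  have h2 : HasFDerivAt (fun b' : EuclideanSpace ℝ (Fin p) => ∏ j ∈ S \ A, (1 - logistic ⟪x j, b'⟫))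
      (∑ i ∈ S \ A, (∏ j ∈ (S \ A).erase i, (1 - logistic ⟪x j, b⟫)) •
        (-((logistic ⟪x i, b⟫ * (1 - logistic ⟪x i, b⟫)) • innerSL ℝ (x i)))) b :=
    HasFDerivAt.finset_prod fun i _ => (hasFDerivAt_logistic_inner (x i) b).const_sub 1
  have h3 := h1.mul h2
  have hfun : (fun b' => pbWeight S A (fun j => logistic ⟪x j, b'⟫))
      = fun b' => (∏ j ∈ A, logistic ⟪x j, b'⟫) * ∏ j ∈ S \ A, (1 - logistic ⟪x j, b'⟫) := rfl
  rw [hfun]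
  refine h3.congr_fderiv ?_
  symm
  set σ := fun j => logistic ⟪x j, b⟫ with hσ
  ext h
  simp only [ContinuousLinearMap.add_apply, ContinuousLinearMap.smul_apply,
    ContinuousLinearMap.coe_sum', Finset.sum_apply, ContinuousLinearMap.sub_apply,
    ContinuousLinearMap.neg_apply, innerSL_apply_apply, smul_eq_mul]
  rw [sum_inner, ← Finset.sum_sdiff hA (f := fun j => σ j * ⟪x j, h⟫)]
  simp only [show ∀ j, logistic ⟪x j, b⟫ = σ j from fun j => rfl]
  have e1 : ∑ i ∈ A, (∏ j ∈ A.erase i, σ j) * (σ i * (1 - σ i) * ⟪x i, h⟫)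
      = ∑ i ∈ A, ((∏ j ∈ A, σ j) * ((1 - σ i) * ⟪x i, h⟫)) := by
    refine Finset.sum_congr rfl fun i hi => ?_
    linear_combination ((1 - σ i) * ⟪x i, h⟫) * (Finset.prod_erase_mul A σ hi)
  have e2 : ∑ i ∈ S \ A, (∏ j ∈ (S \ A).erase i, (1 - σ j)) * (-(σ i * (1 - σ i) * ⟪x i, h⟫))
      = ∑ i ∈ S \ A, (-((∏ j ∈ S \ A, (1 - σ j)) * (σ i * ⟪x i, h⟫))) := by
    refine Finset.sum_congr rfl fun i hi => ?_
    linear_combination (-(σ i * ⟪x i, h⟫)) * (Finset.prod_erase_mul (S \ A) (fun j => 1 - σ j) hi)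
  rw [e1, e2, Finset.sum_neg_distrib, ← Finset.mul_sum, ← Finset.mul_sum]
  have e3 : ∑ i ∈ A, ((1 - σ i) * ⟪x i, h⟫)
      = ∑ i ∈ A, ⟪x i, h⟫ - ∑ i ∈ A, σ i * ⟪x i, h⟫ := by
    rw [← Finset.sum_sub_distrib]
    exact Finset.sum_congr rfl fun i _ => by ring
  rw [e3]
  unfold pbWeight
  ring

lemma pbWeight_pos {S A : Finset J} (hA : A ⊆ S) {pr : J → ℝ}
    (h0 : ∀ j, 0 < pr j) (h1 : ∀ j, pr j < 1) : 0 < pbWeight S A pr := by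
  apply mul_pos
  · exact Finset.prod_pos fun j _ => h0 j
  · exact Finset.prod_pos fun j _ => by linarith [h1 j]

lemma pbPmf_pos {S : Finset J} {D : ℕ} (hD : D ≤ S.card) {pr : J → ℝ}
    (h0 : ∀ j, 0 < pr j) (h1 : ∀ j, pr j < 1) : 0 < pbPmf S D pr :=
  Finset.sum_pos
    (fun A hA => pbWeight_pos (Finset.mem_powersetCard.1 hA).1 h0 h1)
    (Finset.powersetCard_nonempty.2 hD)

lemma hasFDerivAt_pbPmf (S : Finset J) (D : ℕ)
    (x : J → EuclideanSpace ℝ (Fin p)) (b : EuclideanSpace ℝ (Fin p)) :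
    HasFDerivAt (fun b' => pbPmf S D (fun j => logistic ⟪x j, b'⟫))
      (∑ A ∈ S.powersetCard D, (pbWeight S A (fun j => logistic ⟪x j, b⟫)) •
        (innerSL ℝ (∑ j ∈ A, x j)
          - ∑ j ∈ S, logistic ⟪x j, b⟫ • innerSL ℝ (x j))) b := by
  have : (fun b' => pbPmf S D (fun j => logistic ⟪x j, b'⟫))
      = fun b' => ∑ A ∈ S.powersetCard D, pbWeight S A (fun j => logistic ⟪x j, b'⟫) := rfl
  rw [this]
  exact HasFDerivAt.fun_sum fun A hA =>
    hasFDerivAt_pbWeight S A (Finset.mem_powersetCard.1 hA).1 x b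

lemma hasGradientAt_pb (S : Finset J) (D : ℕ) (hD : D ≤ S.card)
    (x : J → EuclideanSpace ℝ (Fin p)) (b : EuclideanSpace ℝ (Fin p)) :
    HasGradientAt (fun b' => Real.log (pbPmf S D (fun j => logistic ⟪x j, b'⟫)))
      ((pbPmf S D (fun j => logistic ⟪x j, b⟫))⁻¹ •
          (∑ A ∈ S.powersetCard D, pbWeight S A (fun j => logistic ⟪x j, b⟫) • ∑ j ∈ A, x j)
        - ∑ j ∈ S, logistic ⟪x j, b⟫ • x j) b := by
  have hP : 0 < pbPmf S D (fun j => logistic ⟪x j, b⟫) :=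
    pbPmf_pos hD (fun j => logistic_pos _) (fun j => logistic_lt_one _)
  have hd := (Real.hasDerivAt_log hP.ne').comp_hasFDerivAt b (hasFDerivAt_pbPmf S D x b)
  rw [hasGradientAt_iff_hasFDerivAt]
  refine hd.congr_fderiv ?_
  symm
  ext h
  simp only [InnerProductSpace.toDual_apply_apply, ContinuousLinearMap.smul_apply,
    ContinuousLinearMap.coe_sum', Finset.sum_apply, ContinuousLinearMap.sub_apply,
    innerSL_apply_apply, smul_eq_mul, inner_sub_left, inner_smul_left, sum_inner,
    RCLike.inner_apply, conj_trivial]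
  have key : (pbPmf S D (fun j => logistic ⟪x j, b⟫))⁻¹ *
        ∑ A ∈ S.powersetCard D, pbWeight S A (fun j => logistic ⟪x j, b⟫) *
          ((∑ i ∈ A, ⟪x i, h⟫) - ∑ i ∈ S, logistic ⟪x i, b⟫ * ⟪x i, h⟫)
      = (∑ A ∈ S.powersetCard D, (pbPmf S D (fun j => logistic ⟪x j, b⟫))⁻¹ *
            (pbWeight S A (fun j => logistic ⟪x j, b⟫) * ∑ i ∈ A, ⟪x i, h⟫))
        - ((pbPmf S D (fun j => logistic ⟪x j, b⟫))⁻¹ *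
            ∑ A ∈ S.powersetCard D, pbWeight S A (fun j => logistic ⟪x j, b⟫)) *
              ∑ i ∈ S, logistic ⟪x i, b⟫ * ⟪x i, h⟫ := by
    conv_lhs => rw [Finset.mul_sum]
    conv_rhs => rw [Finset.mul_sum (S.powersetCard D)
      (fun A => pbWeight S A (fun j => logistic ⟪x j, b⟫))
      ((pbPmf S D (fun j => logistic ⟪x j, b⟫))⁻¹), Finset.sum_mul, ← Finset.sum_sub_distrib]
    exact Finset.sum_congr rfl fun A _ => by ring
  rw [key]
  have hpmf : ∑ A ∈ S.powersetCard D, pbWeight S A (fun j => logistic ⟪x j, b⟫)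
      = pbPmf S D (fun j => logistic ⟪x j, b⟫) := rfl
  rw [hpmf, inv_mul_cancel₀ hP.ne', one_mul, sub_left_inj, Finset.mul_sum]

end AuxCalc

lemma pbCovForm_eq {J : Type*} [DecidableEq J] {p : ℕ}
    (S : Finset J) (pr : J → ℝ) (x : J → EuclideanSpace ℝ (Fin p))
    (u v : EuclideanSpace ℝ (Fin p)) :
    pbCovForm S pr x u v
      = ∑ j ∈ S, pr j * (1 - pr j) * (⟪x j, u⟫ * ⟪x j, v⟫) := by
  unfold pbCovForm
  simp only [sum_inner]
  rw [pb_sum_quad, pb_sum_lin, pb_sum_lin]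
  ring

set_option maxHeartbeats 2000000 in
theorem hessian_pb_loglik {J : Type*} [DecidableEq J] {p : ℕ}
    (S : Finset J) (D : ℕ) (hD : D ≤ S.card)
    (x : J → EuclideanSpace ℝ (Fin p)) (β : EuclideanSpace ℝ (Fin p))
    (u v : EuclideanSpace ℝ (Fin p)) :
    ⟪(fderiv ℝ (fun b : EuclideanSpace ℝ (Fin p) =>
          gradient (fun b' : EuclideanSpace ℝ (Fin p) =>
            Real.log (pbPmf S D (fun j => logistic ⟪x j, b'⟫))) b) β) u, v⟫
      = pbCondCovForm S D (fun j => logistic ⟪x j, β⟫) x u v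
          - pbCovForm S (fun j => logistic ⟪x j, β⟫) x u v := by
  classical
  have hgrad : (fun b : EuclideanSpace ℝ (Fin p) =>
        gradient (fun b' : EuclideanSpace ℝ (Fin p) =>
          Real.log (pbPmf S D (fun j => logistic ⟪x j, b'⟫))) b)
      = fun b => (pbPmf S D (fun j => logistic ⟪x j, b⟫))⁻¹ •
          (∑ A ∈ S.powersetCard D, pbWeight S A (fun j => logistic ⟪x j, b⟫) • ∑ j ∈ A, x j)
        - ∑ j ∈ S, logistic ⟪x j, b⟫ • x j :=
    funext fun b => (hasGradientAt_pb S D hD x b).gradient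
  rw [hgrad]
  have hP : 0 < pbPmf S D (fun j => logistic ⟪x j, β⟫) :=
    pbPmf_pos hD (fun j => logistic_pos _) (fun j => logistic_lt_one _)
  have hPd := hasFDerivAt_pbPmf S D x β
  have hR : DifferentiableAt ℝ (fun b : EuclideanSpace ℝ (Fin p) =>
      ∑ A ∈ S.powersetCard D, pbWeight S A (fun j => logistic ⟪x j, b⟫) • ∑ j ∈ A, x j) β :=
    DifferentiableAt.fun_sum fun A hA =>
      ((hasFDerivAt_pbWeight S A (Finset.mem_powersetCard.1 hA).1 x β).differentiableAt).smul_const _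
  have hM : DifferentiableAt ℝ (fun b : EuclideanSpace ℝ (Fin p) =>
      ∑ j ∈ S, logistic ⟪x j, b⟫ • x j) β :=
    DifferentiableAt.fun_sum fun j _ =>
      ((hasFDerivAt_logistic_inner (x j) β).differentiableAt).smul_const _
  have hγ : DifferentiableAt ℝ (fun b : EuclideanSpace ℝ (Fin p) =>
      (pbPmf S D (fun j => logistic ⟪x j, b⟫))⁻¹ •
          (∑ A ∈ S.powersetCard D, pbWeight S A (fun j => logistic ⟪x j, b⟫) • ∑ j ∈ A, x j)
        - ∑ j ∈ S, logistic ⟪x j, b⟫ • x j) β :=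
    (((hPd.differentiableAt).inv hP.ne').smul hR).sub hM
  have key1 : ⟪(fderiv ℝ (fun b : EuclideanSpace ℝ (Fin p) =>
      (pbPmf S D (fun j => logistic ⟪x j, b⟫))⁻¹ •
          (∑ A ∈ S.powersetCard D, pbWeight S A (fun j => logistic ⟪x j, b⟫) • ∑ j ∈ A, x j)
        - ∑ j ∈ S, logistic ⟪x j, b⟫ • x j) β) u, v⟫
      = fderiv ℝ (fun b : EuclideanSpace ℝ (Fin p) =>
          ⟪((pbPmf S D (fun j => logistic ⟪x j, b⟫))⁻¹ •
          (∑ A ∈ S.powersetCard D, pbWeight S A (fun j => logistic ⟪x j, b⟫) • ∑ j ∈ A, x j)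
        - ∑ j ∈ S, logistic ⟪x j, b⟫ • x j), v⟫) β u := by
    rw [fderiv_inner_apply (𝕜 := ℝ) hγ (differentiableAt_const v) u]
    simp
  rw [key1]
  have hfun : (fun b : EuclideanSpace ℝ (Fin p) =>
        ⟪((pbPmf S D (fun j => logistic ⟪x j, b⟫))⁻¹ •
          (∑ A ∈ S.powersetCard D, pbWeight S A (fun j => logistic ⟪x j, b⟫) • ∑ j ∈ A, x j)
        - ∑ j ∈ S, logistic ⟪x j, b⟫ • x j), v⟫)
      = fun b : EuclideanSpace ℝ (Fin p) =>
          (pbPmf S D (fun j => logistic ⟪x j, b⟫))⁻¹ *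
            (∑ A ∈ S.powersetCard D, pbWeight S A (fun j => logistic ⟪x j, b⟫) *
              (∑ i ∈ A, (⟪x i, v⟫ : ℝ)))
          - ∑ j ∈ S, logistic ⟪x j, b⟫ * ⟪x j, v⟫ := by
    funext b
    simp only [inner_sub_left, sum_inner, real_inner_smul_left]
  rw [hfun]
  have hQd : HasFDerivAt (fun b : EuclideanSpace ℝ (Fin p) =>
      ∑ A ∈ S.powersetCard D, pbWeight S A (fun j => logistic ⟪x j, b⟫) *
        (∑ i ∈ A, (⟪x i, v⟫ : ℝ)))
      (∑ A ∈ S.powersetCard D, (∑ i ∈ A, (⟪x i, v⟫ : ℝ)) •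
        ((pbWeight S A (fun j => logistic ⟪x j, β⟫)) •
          (innerSL ℝ (∑ j ∈ A, x j)
            - ∑ j ∈ S, logistic ⟪x j, β⟫ • innerSL ℝ (x j)))) β :=
    HasFDerivAt.fun_sum fun A hA =>
      (hasFDerivAt_pbWeight S A (Finset.mem_powersetCard.1 hA).1 x β).mul_const _
  have hMd : HasFDerivAt (fun b : EuclideanSpace ℝ (Fin p) =>
      ∑ j ∈ S, logistic ⟪x j, b⟫ * ⟪x j, v⟫)
      (∑ j ∈ S, (⟪x j, v⟫ : ℝ) •
        ((logistic ⟪x j, β⟫ * (1 - logistic ⟪x j, β⟫)) • innerSL ℝ (x j))) β :=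
    HasFDerivAt.fun_sum fun j _ => (hasFDerivAt_logistic_inner (x j) β).mul_const _
  have hPinv := (hasDerivAt_inv hP.ne').comp_hasFDerivAt β hPd
  have htot := (hPinv.mul hQd).sub hMd
  have htot' : HasFDerivAt (fun b : EuclideanSpace ℝ (Fin p) =>
      (pbPmf S D (fun j => logistic ⟪x j, b⟫))⁻¹ *
        (∑ A ∈ S.powersetCard D, pbWeight S A (fun j => logistic ⟪x j, b⟫) *
          (∑ i ∈ A, (⟪x i, v⟫ : ℝ)))
        - ∑ j ∈ S, logistic ⟪x j, b⟫ * ⟪x j, v⟫) _ β := htot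
  rw [htot'.fderiv]
  simp only [ContinuousLinearMap.sub_apply, ContinuousLinearMap.add_apply,
    ContinuousLinearMap.smul_apply, ContinuousLinearMap.coe_sum', Finset.sum_apply,
    innerSL_apply_apply, smul_eq_mul, ContinuousLinearMap.neg_apply]
  simp only [Function.comp_apply, pbCondCovForm, pbCovForm_eq, sum_inner]
  have e1 : ∑ A ∈ S.powersetCard D,
        (∑ i ∈ A, (⟪x i, v⟫ : ℝ)) *
          ((pbWeight S A (fun j => logistic ⟪x j, β⟫)) *
            (∑ i ∈ A, (⟪x i, u⟫ : ℝ) - ∑ i ∈ S, logistic ⟪x i, β⟫ * ⟪x i, u⟫))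
      = (∑ A ∈ S.powersetCard D, pbWeight S A (fun j => logistic ⟪x j, β⟫) *
            ((∑ i ∈ A, (⟪x i, u⟫ : ℝ)) * ∑ i ∈ A, (⟪x i, v⟫ : ℝ)))
        - (∑ i ∈ S, logistic ⟪x i, β⟫ * ⟪x i, u⟫) *
            ∑ A ∈ S.powersetCard D, pbWeight S A (fun j => logistic ⟪x j, β⟫) *
              ∑ i ∈ A, (⟪x i, v⟫ : ℝ) := by
    rw [Finset.mul_sum, ← Finset.sum_sub_distrib]
    exact Finset.sum_congr rfl fun A _ => by ring
  have e2 : ∑ A ∈ S.powersetCard D,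
        (pbWeight S A (fun j => logistic ⟪x j, β⟫)) *
          (∑ i ∈ A, (⟪x i, u⟫ : ℝ) - ∑ i ∈ S, logistic ⟪x i, β⟫ * ⟪x i, u⟫)
      = (∑ A ∈ S.powersetCard D, pbWeight S A (fun j => logistic ⟪x j, β⟫) *
            ∑ i ∈ A, (⟪x i, u⟫ : ℝ))
        - (pbPmf S D (fun j => logistic ⟪x j, β⟫)) *
            ∑ i ∈ S, logistic ⟪x i, β⟫ * ⟪x i, u⟫ := by
    have hpmf : pbPmf S D (fun j => logistic ⟪x j, β⟫)
        = ∑ A ∈ S.powersetCard D, pbWeight S A (fun j => logistic ⟪x j, β⟫) := rfl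
    rw [hpmf, Finset.sum_mul, ← Finset.sum_sub_distrib]
    exact Finset.sum_congr rfl fun A _ => by ring
  have e3 : ∑ j ∈ S, (⟪x j, v⟫ : ℝ) *
        (logistic ⟪x j, β⟫ * (1 - logistic ⟪x j, β⟫) * ⟪x j, u⟫)
      = ∑ j ∈ S, logistic ⟪x j, β⟫ * (1 - logistic ⟪x j, β⟫) * (⟪x j, u⟫ * ⟪x j, v⟫) :=
    Finset.sum_congr rfl fun j _ => by ring
  rw [e1, e2, e3]
  have hPne : (pbPmf S D (fun j => logistic ⟪x j, β⟫)) ≠ 0 := hP.ne'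
  have hsq : ((pbPmf S D (fun j => logistic ⟪x j, β⟫)) ^ 2)⁻¹
      = (pbPmf S D (fun j => logistic ⟪x j, β⟫))⁻¹ * (pbPmf S D (fun j => logistic ⟪x j, β⟫))⁻¹ := by
    rw [sq, mul_inv]
  rw [hsq]
  linear_combination ((pbPmf S D (fun j => logistic ⟪x j, β⟫))⁻¹ *
      ((∑ i ∈ S, logistic ⟪x i, β⟫ * ⟪x i, u⟫) *
        ∑ A ∈ S.powersetCard D, pbWeight S A (fun j => logistic ⟪x j, β⟫) * ∑ i ∈ A, (⟪x i, v⟫ : ℝ))) *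
    (inv_mul_cancel₀ hPne)
end
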